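/- Let A₂ ⊆ A₁ ⊆ A₀ be finite arrangements of hyperplanes in ℝ^d, and fix a total ordering ≻₀ on the set of chambers of A₀. For subarrangements B ⊆ C, let μ[B,C] : T(B) → T(C) send a chamber D of B to the ≻-minimal chamber of C contained in D (where the order on T(C) is the one induced from ≻₀ via μ[C,A₀]). Then μ[A₁,A₀] ∘ μ[A₂,A₁] = μ[A₂,A₀]. -/

import Mathlib

open Matrix

/-!
STATEMENT 0: For real hyperplane arrangements A₂ ⊆ A₁ ⊆ A₀ with a total order ≻₀ on the
chambers of A₀, the sections μ satisfy μ[A₁,A₀] ∘ μ[A₂,A₁] = μ[A₂,A₀].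
A hyperplane is modelled as a pair p = (α, a) with hyperplane {x | ⟨α,x⟩ = a};
chambers are connected components of the complement.  The maps μ are characterized by
their defining property (being the minimal chamber contained in the given one), the
order on T(A₁) being the one induced from ≻₀ via μ[A₁,A₀].
-/

/-- A hyperplane in ℝ^d, given by a linear functional and a level. -/
abbrev HypPair (d : ℕ) := (Fin d → ℝ) × ℝ

/-- The hyperplane determined by a pair. -/
def hypSet {d : ℕ} (p : HypPair d) : Set (Fin d → ℝ) := {x | p.1 ⬝ᵥ x = p.2}

/-- The complement of an arrangement. -/
def hypComplement {d : ℕ} (A : Finset (HypPair d)) : Set (Fin d → ℝ) :=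
  {x | ∀ p ∈ A, p.1 ⬝ᵥ x ≠ p.2}

/-- `C` is a chamber of the arrangement `A`: a connected component of the complement. -/
def IsChamber {d : ℕ} (A : Finset (HypPair d)) (C : Set (Fin d → ℝ)) : Prop :=
  ∃ x ∈ hypComplement A, C = connectedComponentIn (hypComplement A) x

/-- The type of chambers of an arrangement. -/
abbrev Chamber {d : ℕ} (A : Finset (HypPair d)) := {C : Set (Fin d → ℝ) // IsChamber A C}

theorem stmt0 {d : ℕ} (A₀ A₁ A₂ : Finset (HypPair d))
    (h21 : A₂ ⊆ A₁) (h10 : A₁ ⊆ A₀)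
    -- a total order ≻₀ on the chambers of A₀ (as a reflexive linear order r₀)
    (r₀ : Chamber A₀ → Chamber A₀ → Prop) (hr₀ : IsLinearOrder (Chamber A₀) r₀)
    -- μ[A₁,A₀]: the r₀-minimal chamber of A₀ contained in a chamber of A₁
    (μ10 : Chamber A₁ → Chamber A₀)
    (hμ10sub : ∀ D : Chamber A₁, (μ10 D).1 ⊆ D.1)
    (hμ10min : ∀ (D : Chamber A₁) (K : Chamber A₀), K.1 ⊆ D.1 → r₀ (μ10 D) K)
    -- μ[A₂,A₁]: minimal wrt the order on T(A₁) induced from r₀ via μ10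
    (μ21 : Chamber A₂ → Chamber A₁)
    (hμ21sub : ∀ D : Chamber A₂, (μ21 D).1 ⊆ D.1)
    (hμ21min : ∀ (D : Chamber A₂) (K : Chamber A₁), K.1 ⊆ D.1 → r₀ (μ10 (μ21 D)) (μ10 K))
    -- μ[A₂,A₀]: minimal wrt r₀
    (μ20 : Chamber A₂ → Chamber A₀)
    (hμ20sub : ∀ D : Chamber A₂, (μ20 D).1 ⊆ D.1)
    (hμ20min : ∀ (D : Chamber A₂) (K : Chamber A₀), K.1 ⊆ D.1 → r₀ (μ20 D) K) :
    ∀ D : Chamber A₂, μ10 (μ21 D) = μ20 D := by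
  intro D
  obtain ⟨x, hx, hCeq⟩ := (μ20 D).2
  have hcompl : hypComplement A₀ ⊆ hypComplement A₁ := fun y hy p hp => hy p (h10 hp)
  have hcompl' : hypComplement A₁ ⊆ hypComplement A₂ := fun y hy p hp => hy p (h21 hp)
  have hx1 : x ∈ hypComplement A₁ := hcompl hx
  set K : Chamber A₁ := ⟨connectedComponentIn (hypComplement A₁) x, ⟨x, hx1, rfl⟩⟩ with hK
  have hsub1 : (μ20 D).1 ⊆ K.1 := by
    rw [hCeq]; exact connectedComponentIn_mono x hcompl
  have hxD : x ∈ D.1 := hμ20sub D (by rw [hCeq]; exact mem_connectedComponentIn hx)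
  have hKD : K.1 ⊆ D.1 := by
    obtain ⟨y, hy, hDeq⟩ := D.2
    have : D.1 = connectedComponentIn (hypComplement A₂) x := by
      rw [hDeq]
      exact connectedComponentIn_eq (by rw [← hDeq]; exact hxD)
    rw [this]
    exact connectedComponentIn_mono x hcompl'
  have h1 : r₀ (μ10 (μ21 D)) (μ10 K) := hμ21min D K hKD
  have h2 : r₀ (μ10 K) (μ20 D) := hμ10min K (μ20 D) hsub1
  have h3 : r₀ (μ20 D) (μ10 (μ21 D)) :=
    hμ20min D _ ((hμ10sub (μ21 D)).trans (hμ21sub D))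
  exact hr₀.toIsPartialOrder.toAntisymm.antisymm _ _
    (hr₀.toIsPartialOrder.toIsPreorder.toIsTrans.trans _ _ _ h1 h2) h3
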